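/- (Shift identity for the master polynomial) Let r, q be coprime positive integers with 1/2 < r/q < 1, m an integer, κ = r/q + m, p = kq+1 an odd prime, and s a positive integer such that the positivity conditions hold for both m and m+1 (i.e. p^s + (1−p^s)r/q + m+1 > 0 and (p^s−1)r/q − (m+1) > 0). Then the following congruence of polynomials holds in ℤ_p[t,z_1,z_2,λ_1,λ_2] modulo p^s: (z_1−z_2)·(∂_1−∂_2) Φ_s(t,z,λ,κ) − 2κ·Φ_s(t,z,λ,κ) ≡ κ·(z_1−z_2)·Φ_s(t,z,λ,κ+1) (mod p^s), i.e. D_κ Φ_s(t,z,λ,κ) ≡ κ Φ_s(t,z,λ,κ+1) (mod p^s) after multiplying through by (z_1−z_2), where D_κ = ∂_1 − ∂_2 − 2κ/(z_1−z_2), κ = r/q + m ∈ ℤ_p, and ∂_i is the formal partial derivative with respect to z_i. -/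

import Mathlib

open Finset

noncomputable section

/-- `d(s) = ⌊s(p−1)/(p−2)⌋ + 1`. -/
def truncDeg (p s : ℕ) : ℕ := s * (p - 1) / (p - 2) + 1

/-- The exponent `p^s + (1−p^s)r/q + m' = ((q−r)p^s + r)/q + m'` of `(z₁−z₂)`. -/
def zExp (p q r s : ℕ) (m' : ℤ) : ℤ := (((q : ℤ) - r) * (p : ℤ) ^ s + r) / q + m'

/-- The exponent `(p^s−1)r/q − m'` of `(t−z₁)(t−z₂)`. -/
def tExp (p q r s : ℕ) (m' : ℤ) : ℤ := ((r : ℤ) * ((p : ℤ) ^ s - 1)) / q - m'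

/-- The master polynomial
`Φ_s(t,z,λ,κ') = E_s(pλ₁(z₁+z₂)+p(λ₂−λ₁)t) · (z₁−z₂)^{p^s+(1−p^s)r/q+m'} ·
((t−z₁)(t−z₂))^{(p^s−1)r/q−m'}` for `κ' = r/q + m'`, as an element of
`ℚ_p[t,z₁,z₂,λ₁,λ₂]` with `t = X 0`, `z₁ = X 1`, `z₂ = X 2`, `λ₁ = X 3`, `λ₂ = X 4`. -/
def masterPoly5 (p : ℕ) [Fact p.Prime] (q r s : ℕ) (m' : ℤ) : MvPolynomial (Fin 5) ℚ_[p] :=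
  (∑ k ∈ Finset.range (truncDeg p s + 1),
      MvPolynomial.C ((k.factorial : ℚ_[p])⁻¹) *
        (MvPolynomial.C (p : ℚ_[p]) * MvPolynomial.X 3 *
            (MvPolynomial.X 1 + MvPolynomial.X 2) +
          MvPolynomial.C (p : ℚ_[p]) * (MvPolynomial.X 4 - MvPolynomial.X 3) *
            MvPolynomial.X 0) ^ k) *
    (MvPolynomial.X 1 - MvPolynomial.X 2) ^ (zExp p q r s m').toNat *
    ((MvPolynomial.X 0 - MvPolynomial.X 1) *
        (MvPolynomial.X 0 - MvPolynomial.X 2)) ^ (tExp p q r s m').toNat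

namespace MasterShiftAux

open MvPolynomial

variable {p : ℕ} [Fact p.Prime]

lemma aux_valfact_le (k : ℕ) : padicValNat p k.factorial ≤ k := by
  have h := sub_one_mul_padicValNat_factorial (p := p) k
  have hp2 : 2 ≤ p := (Fact.out : p.Prime).two_le
  calc padicValNat p k.factorial ≤ (p - 1) * padicValNat p k.factorial :=
        Nat.le_mul_of_pos_left _ (by omega)
    _ = k - (p.digits k).sum := h
    _ ≤ k := Nat.sub_le _ _

lemma aux_norm_ppow_fact (k : ℕ) : ‖((p:ℚ_[p])^k * ((k.factorial : ℚ_[p]))⁻¹)‖ ≤ 1 := by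
  have hf : ((k.factorial : ℚ_[p])) ≠ 0 := by
    exact_mod_cast Nat.cast_ne_zero.mpr k.factorial_ne_zero
  have hv : ‖((k.factorial : ℚ_[p]))‖ = (p:ℝ) ^ (-(padicValNat p k.factorial : ℤ)) := by
    rw [Padic.norm_eq_zpow_neg_valuation hf, Padic.valuation_natCast]
  have hp1 : (1:ℝ) < (p:ℝ) := by exact_mod_cast (Fact.out : p.Prime).one_lt
  have hle := aux_valfact_le (p := p) k
  rw [norm_mul, norm_inv, norm_pow, Padic.norm_p, hv]
  rw [← zpow_natCast ((p:ℝ)⁻¹), inv_zpow, ← zpow_neg, ← zpow_neg, neg_neg,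
    ← zpow_add₀ (by positivity : (p:ℝ) ≠ 0)]
  exact zpow_le_one_of_nonpos₀ hp1.le (by omega)

/-- the coefficient `p^k/k!` as a `p`-adic integer. -/
def epk (p : ℕ) [Fact p.Prime] (k : ℕ) : ℤ_[p] :=
  ⟨(p:ℚ_[p])^k * ((k.factorial : ℚ_[p]))⁻¹, aux_norm_ppow_fact k⟩

/-- The truncated-exponential part of the master polynomial, over `ℤ_[p]`. -/
def intE (p : ℕ) [Fact p.Prime] (s : ℕ) : MvPolynomial (Fin 5) ℤ_[p] :=
  ∑ k ∈ Finset.range (truncDeg p s + 1),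
    C (epk p k) * (X 3 * (X 1 + X 2) + (X 4 - X 3) * X 0) ^ k

/-- The truncated-exponential part of the master polynomial, over `ℚ_[p]`. -/
def Epart (p : ℕ) [Fact p.Prime] (s : ℕ) : MvPolynomial (Fin 5) ℚ_[p] :=
  ∑ k ∈ Finset.range (truncDeg p s + 1),
    C ((k.factorial : ℚ_[p])⁻¹) *
      (C (p : ℚ_[p]) * X 3 * (X 1 + X 2) + C (p : ℚ_[p]) * (X 4 - X 3) * X 0) ^ k

lemma masterPoly5_eq (q r s : ℕ) (m' : ℤ) :
    masterPoly5 p q r s m' = Epart p s * (X 1 - X 2) ^ (zExp p q r s m').toNat *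
      ((X 0 - X 1) * (X 0 - X 2)) ^ (tExp p q r s m').toNat := rfl

lemma map_intE (s : ℕ) :
    MvPolynomial.map (PadicInt.Coe.ringHom (p := p)) (intE p s) = Epart p s := by
  rw [intE, Epart, map_sum]
  refine Finset.sum_congr rfl fun k _ => ?_
  rw [map_mul, map_pow, MvPolynomial.map_C]
  have h1 : (PadicInt.Coe.ringHom (p := p)) (epk p k)
      = (p:ℚ_[p])^k * ((k.factorial : ℚ_[p]))⁻¹ := rfl
  rw [h1]
  have h2 : MvPolynomial.map (PadicInt.Coe.ringHom (p := p))
      ((X 3 * (X 1 + X 2) + (X 4 - X 3) * X 0 : MvPolynomial (Fin 5) ℤ_[p]))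
      = (X 3 * (X 1 + X 2) + (X 4 - X 3) * X 0 : MvPolynomial (Fin 5) ℚ_[p]) := by
    simp
  rw [h2]
  have h3 : (C (p : ℚ_[p]) * X 3 * (X 1 + X 2) + C (p : ℚ_[p]) * (X 4 - X 3) * X 0
      : MvPolynomial (Fin 5) ℚ_[p])
      = C (p : ℚ_[p]) * (X 3 * (X 1 + X 2) + (X 4 - X 3) * X 0) := by ring
  rw [h3, mul_pow, ← C_pow, C_mul]
  ring

lemma coeff_map_norm_le (P0 : MvPolynomial (Fin 5) ℤ_[p]) (mon : Fin 5 →₀ ℕ) :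
    ‖(MvPolynomial.map (PadicInt.Coe.ringHom (p := p)) P0).coeff mon‖ ≤ 1 := by
  rw [MvPolynomial.coeff_map]
  exact (P0.coeff mon).2

lemma coeff_EZT_norm_le (s a b : ℕ) (mon : Fin 5 →₀ ℕ) :
    ‖((Epart p s * (X 1 - X 2) ^ a *
        ((X 0 - X 1) * (X 0 - X 2)) ^ b : MvPolynomial (Fin 5) ℚ_[p]).coeff mon)‖ ≤ 1 := by
  have h : (Epart p s * (X 1 - X 2) ^ a *
      ((X 0 - X 1) * (X 0 - X 2)) ^ b : MvPolynomial (Fin 5) ℚ_[p])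
      = MvPolynomial.map (PadicInt.Coe.ringHom (p := p))
        (intE p s * (X 1 - X 2) ^ a * ((X 0 - X 1) * (X 0 - X 2)) ^ b) := by
    rw [map_mul, map_mul, map_pow, map_pow, map_intE]
    simp
  rw [h]
  exact coeff_map_norm_le _ _

lemma coeff_ZEZT_norm_le (s a b : ℕ) (mon : Fin 5 →₀ ℕ) :
    ‖(((X 1 - X 2) * (Epart p s * (X 1 - X 2) ^ a *
        ((X 0 - X 1) * (X 0 - X 2)) ^ b) : MvPolynomial (Fin 5) ℚ_[p]).coeff mon)‖ ≤ 1 := by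
  have h : ((X 1 - X 2) * (Epart p s * (X 1 - X 2) ^ a *
      ((X 0 - X 1) * (X 0 - X 2)) ^ b) : MvPolynomial (Fin 5) ℚ_[p])
      = MvPolynomial.map (PadicInt.Coe.ringHom (p := p))
        ((X 1 - X 2) * (intE p s * (X 1 - X 2) ^ a * ((X 0 - X 1) * (X 0 - X 2)) ^ b)) := by
    rw [map_mul, map_mul, map_mul, map_pow, map_pow, map_intE]
    simp
  rw [h]
  exact coeff_map_norm_le _ _

lemma aux_hE (s : ℕ) :
    pderiv (1 : Fin 5) (Epart p s) = pderiv (2 : Fin 5) (Epart p s) := by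
  rw [Epart, map_sum, map_sum]
  refine Finset.sum_congr rfl fun k _ => ?_
  have h1 : pderiv (1 : Fin 5)
      ((C (p : ℚ_[p]) * X 3 * (X 1 + X 2) + C (p : ℚ_[p]) * (X 4 - X 3) * X 0))
      = C (p : ℚ_[p]) * X 3 := by
    simp [pderiv_mul, pderiv_C]
  have h2 : pderiv (2 : Fin 5)
      ((C (p : ℚ_[p]) * X 3 * (X 1 + X 2) + C (p : ℚ_[p]) * (X 4 - X 3) * X 0))
      = C (p : ℚ_[p]) * X 3 := by
    simp [pderiv_mul, pderiv_C]
  rw [pderiv_C_mul, pderiv_C_mul, pderiv_pow, pderiv_pow, h1, h2]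

lemma aux_key (E : MvPolynomial (Fin 5) ℚ_[p]) (hE : pderiv 1 E = pderiv 2 E) (a b : ℕ) :
    (X 1 - X 2) * (pderiv 1 (E * (X 1 - X 2)^(a+1) * ((X 0 - X 1) * (X 0 - X 2))^(b+1))
      - pderiv 2 (E * (X 1 - X 2)^(a+1) * ((X 0 - X 1) * (X 0 - X 2))^(b+1)))
  = (((2*(a+1) : ℕ) : MvPolynomial (Fin 5) ℚ_[p])) *
      (E * (X 1 - X 2)^(a+1) * ((X 0 - X 1) * (X 0 - X 2))^(b+1))
    - (((b+1 : ℕ)) : MvPolynomial (Fin 5) ℚ_[p]) *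
        ((X 1 - X 2) * (E * (X 1 - X 2)^(a+2) * ((X 0 - X 1) * (X 0 - X 2))^b)) := by
  have e1 : pderiv (1 : Fin 5) ((X 1 : MvPolynomial (Fin 5) ℚ_[p]) - X 2) = 1 := by simp
  have e2 : pderiv (2 : Fin 5) ((X 1 : MvPolynomial (Fin 5) ℚ_[p]) - X 2) = -1 := by simp
  have e3 : pderiv (1 : Fin 5) ((X 0 - X 1) * ((X 0 : MvPolynomial (Fin 5) ℚ_[p]) - X 2))
      = -(X 0 - X 2) := by simp [pderiv_mul]
  have e4 : pderiv (2 : Fin 5) ((X 0 - X 1) * ((X 0 : MvPolynomial (Fin 5) ℚ_[p]) - X 2))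
      = -(X 0 - X 1) := by simp [pderiv_mul]
  simp only [pderiv_mul, pderiv_pow, e1, e2, e3, e4, Nat.add_sub_cancel, hE]
  push_cast
  ring

lemma aux_qnorm {q k : ℕ} (hq : 0 < q) (hk : 0 < k) (hp : p = k * q + 1) :
    ‖((q : ℤ) : ℚ_[p])‖ = 1 := by
  have h1 : ‖((q:ℤ) : ℚ_[p])‖ ≤ 1 := Padic.norm_int_le_one _
  rcases lt_or_eq_of_le h1 with h | h
  · exfalso
    have := (Padic.norm_intCast_lt_one_iff (k := (q:ℤ))).mp h
    have hpq : p ∣ q := by exact_mod_cast this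
    have := Nat.le_of_dvd hq hpq
    nlinarith
  · exact h

lemma aux_pows (s : ℕ) : ‖((p : ℚ_[p]))^s‖ = (p:ℝ) ^ (-(s:ℤ)) := by
  rw [norm_pow, Padic.norm_p, ← zpow_natCast ((p:ℝ)⁻¹), inv_zpow, ← zpow_neg]

omit [Fact p.Prime] in
lemma aux_mod {q k : ℕ} (s : ℕ) (hp : p = k * q + 1) : ((p:ℤ))^s ≡ 1 [ZMOD q] := by
  have h : ((p:ℤ)) ≡ 1 [ZMOD q] := by
    have : (p:ℤ) - 1 = k * q := by rw [hp]; push_cast; ring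
    exact (Int.ModEq.symm (Int.modEq_iff_dvd.mpr ⟨k, by linarith⟩))
  simpa using h.pow s

lemma aux_c1 {q r k : ℕ} (s : ℕ) (hq : 0 < q) (hk : 0 < k) (hp : p = k * q + 1) (m : ℤ) :
    ‖2*(((zExp p q r s m) : ℚ_[p])) - 2*((r:ℚ_[p])/q + m)‖ ≤ (p:ℝ)^(-(s:ℤ)) := by
  have hqz : ((q:ℤ):ℚ_[p]) ≠ 0 := by
    rw [Ne, ← norm_eq_zero, aux_qnorm hq hk hp]; norm_num
  have hqz' : ((q:ℚ_[p])) ≠ 0 := by exact_mod_cast hqz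
  have hdvd1 : (q:ℤ) ∣ (((q : ℤ) - r) * (p : ℤ) ^ s + r) := by
    have h := (aux_mod (p := p) (q := q) s hp).mul_left ((q:ℤ) - r)
    have h2 : ((q : ℤ) - r) * (p : ℤ) ^ s + r ≡ ((q:ℤ) - r) * 1 + r [ZMOD q] := h.add_right r
    have h3 : ((q:ℤ) - r) * 1 + r = q := by ring
    rw [h3] at h2
    exact Int.modEq_zero_iff_dvd.mp (h2.trans (Int.modEq_zero_iff_dvd.mpr dvd_rfl))
  have hZ : (q:ℤ) * (zExp p q r s m) = ((q : ℤ) - r) * (p : ℤ) ^ s + r + q * m := by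
    rw [zExp, mul_add, Int.mul_ediv_cancel' hdvd1]
  have h5 : (q:ℚ_[p]) * ((zExp p q r s m : ℚ_[p]))
      = ((q:ℚ_[p]) - r) * (p:ℚ_[p])^s + r + q*m := by
    exact_mod_cast congrArg (fun n : ℤ => (n : ℚ_[p])) hZ
  have hrq : (r:ℚ_[p])/q * q = r := div_mul_cancel₀ _ hqz'
  have hc : (2*(((zExp p q r s m) : ℚ_[p])) - 2*((r:ℚ_[p])/q + m)) * ((q:ℤ):ℚ_[p])
      = ((2*((q:ℤ) - r) : ℤ) : ℚ_[p]) * ((p:ℚ_[p]))^s := by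
    push_cast
    linear_combination 2*h5 - 2*hrq
  calc ‖2*(((zExp p q r s m) : ℚ_[p])) - 2*((r:ℚ_[p])/q + m)‖
      = ‖(2*(((zExp p q r s m) : ℚ_[p])) - 2*((r:ℚ_[p])/q + m)) * ((q:ℤ):ℚ_[p])‖ := by
        rw [norm_mul, aux_qnorm hq hk hp, mul_one]
    _ = ‖((2*((q:ℤ) - r) : ℤ) : ℚ_[p])‖ * ‖((p:ℚ_[p]))^s‖ := by rw [hc, norm_mul]
    _ ≤ 1 * (p:ℝ)^(-(s:ℤ)) := by
        rw [aux_pows]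
        gcongr
        exact Padic.norm_int_le_one _
    _ = (p:ℝ)^(-(s:ℤ)) := one_mul _

lemma aux_c2 {q r k : ℕ} (s : ℕ) (hq : 0 < q) (hk : 0 < k) (hp : p = k * q + 1) (m : ℤ) :
    ‖(((tExp p q r s m) : ℚ_[p])) + ((r:ℚ_[p])/q + m)‖ ≤ (p:ℝ)^(-(s:ℤ)) := by
  have hqz : ((q:ℤ):ℚ_[p]) ≠ 0 := by
    rw [Ne, ← norm_eq_zero, aux_qnorm hq hk hp]; norm_num
  have hqz' : ((q:ℚ_[p])) ≠ 0 := by exact_mod_cast hqz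
  have hdvd2 : (q:ℤ) ∣ ((r:ℤ) * ((p : ℤ) ^ s - 1)) := by
    have h := (aux_mod (p := p) (q := q) s hp)
    have h2 : (q:ℤ) ∣ ((p:ℤ)^s - 1) := dvd_sub_comm.mp (Int.ModEq.dvd h)
    exact Dvd.dvd.mul_left h2 r
  have hZ : (q:ℤ) * (tExp p q r s m) = (r:ℤ) * ((p : ℤ) ^ s - 1) - q * m := by
    rw [tExp, mul_sub, Int.mul_ediv_cancel' hdvd2]
  have h5 : (q:ℚ_[p]) * ((tExp p q r s m : ℚ_[p]))
      = (r:ℚ_[p]) * ((p:ℚ_[p])^s - 1) - q*m := by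
    exact_mod_cast congrArg (fun n : ℤ => (n : ℚ_[p])) hZ
  have hrq : (r:ℚ_[p])/q * q = r := div_mul_cancel₀ _ hqz'
  have hc : ((((tExp p q r s m) : ℚ_[p])) + ((r:ℚ_[p])/q + m)) * ((q:ℤ):ℚ_[p])
      = ((r : ℤ) : ℚ_[p]) * ((p:ℚ_[p]))^s := by
    push_cast
    linear_combination h5 + hrq
  calc ‖(((tExp p q r s m) : ℚ_[p])) + ((r:ℚ_[p])/q + m)‖
      = ‖((((tExp p q r s m) : ℚ_[p])) + ((r:ℚ_[p])/q + m)) * ((q:ℤ):ℚ_[p])‖ := by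
        rw [norm_mul, aux_qnorm hq hk hp, mul_one]
    _ = ‖((r:ℤ) : ℚ_[p])‖ * ‖((p:ℚ_[p]))^s‖ := by rw [hc, norm_mul]
    _ ≤ 1 * (p:ℝ)^(-(s:ℤ)) := by
        rw [aux_pows]
        gcongr
        exact Padic.norm_int_le_one _
    _ = (p:ℝ)^(-(s:ℤ)) := one_mul _

end MasterShiftAux

open MvPolynomial MasterShiftAux in
/-- **Shift identity for the master polynomial.** Under the standing assumptions, with
the positivity conditions holding for both `m` and `m+1`, the congruence
`D_κ Φ_s(t,z,λ,κ) ≡ κ Φ_s(t,z,λ,κ+1) (mod p^s)` holds after multiplying through by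
`(z₁−z₂)`, where `D_κ = ∂₁ − ∂₂ − 2κ/(z₁−z₂)` and `κ = r/q + m ∈ ℤ_p`:
`(z₁−z₂)(∂₁−∂₂)Φ_s(κ) − 2κ·Φ_s(κ) ≡ κ·(z₁−z₂)·Φ_s(κ+1) (mod p^s)`,
i.e. every coefficient of the difference lies in `p^s ℤ_p`. -/
theorem master_shift_identity
    (p q r k s : ℕ) [Fact p.Prime] (hodd : p ≠ 2)
    (hcop : Nat.Coprime r q) (hhalf : q < 2 * r) (hlt : r < q)
    (hk : 0 < k) (hp : p = k * q + 1) (hs : 0 < s) (m : ℤ)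
    (hpos₁ : 0 < zExp p q r s m) (hpos₂ : 0 < tExp p q r s m)
    (hpos₃ : 0 < zExp p q r s (m + 1)) (hpos₄ : 0 < tExp p q r s (m + 1)) :
    ∀ mon : Fin 5 →₀ ℕ,
      ‖(((MvPolynomial.X 1 - MvPolynomial.X 2) *
            (MvPolynomial.pderiv 1 (masterPoly5 p q r s m) -
              MvPolynomial.pderiv 2 (masterPoly5 p q r s m)) -
          MvPolynomial.C (2 * ((r : ℚ_[p]) / (q : ℚ_[p]) + (m : ℚ_[p]))) *
            masterPoly5 p q r s m) -
        MvPolynomial.C ((r : ℚ_[p]) / (q : ℚ_[p]) + (m : ℚ_[p])) *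
          (MvPolynomial.X 1 - MvPolynomial.X 2) *
          masterPoly5 p q r s (m + 1)).coeff mon‖ ≤ (p : ℝ) ^ (-(s : ℤ)) := by
  intro mon
  have hq : 0 < q := by omega
  -- exponent bookkeeping
  have hze : zExp p q r s (m + 1) = zExp p q r s m + 1 := by unfold zExp; ring
  have hte : tExp p q r s (m + 1) = tExp p q r s m - 1 := by unfold tExp; ring
  obtain ⟨a, ha⟩ : ∃ a, (zExp p q r s m).toNat = a + 1 := ⟨(zExp p q r s m).toNat - 1, by omega⟩
  obtain ⟨b, hb⟩ : ∃ b, (tExp p q r s m).toNat = b + 1 := ⟨(tExp p q r s m).toNat - 1, by omega⟩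
  have ha' : (zExp p q r s (m + 1)).toNat = a + 2 := by omega
  have hb' : (tExp p q r s (m + 1)).toNat = b := by omega
  have hm1 : masterPoly5 p q r s m
      = Epart p s * (X 1 - X 2) ^ (a + 1) * ((X 0 - X 1) * (X 0 - X 2)) ^ (b + 1) := by
    rw [masterPoly5_eq, ha, hb]
  have hm2 : masterPoly5 p q r s (m + 1)
      = Epart p s * (X 1 - X 2) ^ (a + 2) * ((X 0 - X 1) * (X 0 - X 2)) ^ b := by
    rw [masterPoly5_eq, ha', hb']
  -- scalar coefficients
  set c1 : ℚ_[p] := 2*(((zExp p q r s m) : ℚ_[p])) - 2*((r:ℚ_[p])/q + m) with hc1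
  set c2 : ℚ_[p] := (((tExp p q r s m) : ℚ_[p])) + ((r:ℚ_[p])/q + m) with hc2
  -- the nat casts appearing in the key identity are the right scalars
  have hca : (((a+1 : ℕ)) : ℚ_[p]) = ((zExp p q r s m : ℤ) : ℚ_[p]) := by
    rw [← ha]
    exact_mod_cast congrArg (fun n : ℤ => (n : ℚ_[p])) (Int.toNat_of_nonneg hpos₁.le)
  have hcb : (((b+1 : ℕ)) : ℚ_[p]) = ((tExp p q r s m : ℤ) : ℚ_[p]) := by
    rw [← hb]
    exact_mod_cast congrArg (fun n : ℤ => (n : ℚ_[p])) (Int.toNat_of_nonneg hpos₂.le)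
  -- the main algebraic identity
  have heq : ((MvPolynomial.X 1 - MvPolynomial.X 2) *
            (MvPolynomial.pderiv 1 (masterPoly5 p q r s m) -
              MvPolynomial.pderiv 2 (masterPoly5 p q r s m)) -
          MvPolynomial.C (2 * ((r : ℚ_[p]) / (q : ℚ_[p]) + (m : ℚ_[p]))) *
            masterPoly5 p q r s m) -
        MvPolynomial.C ((r : ℚ_[p]) / (q : ℚ_[p]) + (m : ℚ_[p])) *
          (MvPolynomial.X 1 - MvPolynomial.X 2) *
          masterPoly5 p q r s (m + 1)
      = C c1 * (Epart p s * (X 1 - X 2) ^ (a + 1) * ((X 0 - X 1) * (X 0 - X 2)) ^ (b + 1))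
        - C c2 * ((X 1 - X 2) *
            (Epart p s * (X 1 - X 2) ^ (a + 2) * ((X 0 - X 1) * (X 0 - X 2)) ^ b)) := by
    rw [hm1, hm2, aux_key (Epart p s) (aux_hE s) a b]
    have h1 : (((2*(a+1) : ℕ)) : MvPolynomial (Fin 5) ℚ_[p])
        = C ((2*(a+1) : ℕ) : ℚ_[p]) := by rw [C_eq_coe_nat]
    have h2 : (((b+1 : ℕ)) : MvPolynomial (Fin 5) ℚ_[p])
        = C ((b+1 : ℕ) : ℚ_[p]) := by rw [C_eq_coe_nat]
    rw [h1, h2]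
    have h3 : ((2*(a+1) : ℕ) : ℚ_[p]) = 2 * ((zExp p q r s m : ℤ) : ℚ_[p]) := by
      push_cast [← hca]; ring
    rw [h3, hcb, hc1, hc2]
    simp only [map_add, map_mul, map_sub]
    ring
  rw [heq]
  rw [MvPolynomial.coeff_sub, coeff_C_mul, coeff_C_mul]
  have hx := coeff_EZT_norm_le (p := p) s (a+1) (b+1) mon
  have hy := coeff_ZEZT_norm_le (p := p) s (a+2) b mon
  have hn1 := aux_c1 (p := p) (q := q) (r := r) (k := k) s hq hk hp m
  have hn2 := aux_c2 (p := p) (q := q) (r := r) (k := k) s hq hk hp m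
  rw [← hc1] at hn1
  rw [← hc2] at hn2
  have hb1 : ‖c1 * (Epart p s * (X 1 - X 2) ^ (a + 1) *
      ((X 0 - X 1) * (X 0 - X 2)) ^ (b + 1) : MvPolynomial (Fin 5) ℚ_[p]).coeff mon‖
      ≤ (p:ℝ)^(-(s:ℤ)) := by
    rw [norm_mul]
    calc ‖c1‖ * ‖_‖ ≤ (p:ℝ)^(-(s:ℤ)) * 1 :=
          mul_le_mul hn1 hx (norm_nonneg _) (by positivity)
      _ = (p:ℝ)^(-(s:ℤ)) := mul_one _
  have hb2 : ‖c2 * ((X 1 - X 2) * (Epart p s * (X 1 - X 2) ^ (a + 2) *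
      ((X 0 - X 1) * (X 0 - X 2)) ^ b) : MvPolynomial (Fin 5) ℚ_[p]).coeff mon‖
      ≤ (p:ℝ)^(-(s:ℤ)) := by
    rw [norm_mul]
    calc ‖c2‖ * ‖_‖ ≤ (p:ℝ)^(-(s:ℤ)) * 1 :=
          mul_le_mul hn2 hy (norm_nonneg _) (by positivity)
      _ = (p:ℝ)^(-(s:ℤ)) := mul_one _
  have htri : ∀ x y : ℚ_[p], ‖x - y‖ ≤ max ‖x‖ ‖y‖ := fun x y => by
    simpa [sub_eq_add_neg] using Padic.nonarchimedean x (-y)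
  exact le_trans (htri _ _) (max_le hb1 hb2)
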